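/- Let α₁, …, α_k be pairwise distinct complex numbers and a₁, …, a_k points in ℂ² \ {z₂ = 0} with pairwise distinct second coordinates. Then there exists a proper injective holomorphic immersion φ : ℂ → ℂ² such that φ(α_j) = a_j for 1 ≤ j ≤ k and φ(ℂ) ⊆ ℂ² \ {(z₁, z₂) : z₂ = 0}. -/

import Mathlib

open Polynomial Metric

/-- Given distinct α₁,…,α_k ∈ ℂ and points aⱼ ∈ ℂ² \ {z₂ = 0} with pairwise distinct second
coordinates, there is a proper injective holomorphic immersion φ : ℂ → ℂ² with φ(αⱼ) = aⱼ
and image avoiding {z₂ = 0}. -/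
theorem stmt8 (k : ℕ) (α : Fin k → ℂ) (hα : Function.Injective α)
    (a : Fin k → ℂ × ℂ) (h0 : ∀ j, (a j).2 ≠ 0)
    (h2 : Function.Injective fun j => (a j).2) :
    ∃ φ : ℂ → ℂ × ℂ, Differentiable ℂ φ ∧ Function.Injective φ ∧
      (∀ t, deriv φ t ≠ 0) ∧
      (∀ K : Set (ℂ × ℂ), IsCompact K → IsCompact (φ ⁻¹' K)) ∧
      (∀ j, φ (α j) = a j) ∧ (∀ t, (φ t).2 ≠ 0) := by
  set G : ℂ[X] := Lagrange.interpolate Finset.univ α (fun j => Complex.log (a j).2) with hG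
  set Q : ℂ[X] := Lagrange.interpolate Finset.univ (fun j => (a j).2)
      (fun j => (a j).1 - α j) with hQ
  set w : ℂ → ℂ := fun t => Complex.exp (G.eval t) with hw
  set φ : ℂ → ℂ × ℂ := fun t => (t + Q.eval (w t), w t) with hφ
  have hwd : ∀ t : ℂ, HasDerivAt w (Complex.exp (G.eval t) * G.derivative.eval t) t := by
    intro t
    exact (Complex.hasDerivAt_exp (G.eval t)).comp t (G.hasDerivAt t)
  have hφd : ∀ t : ℂ, HasDerivAt φ
      (1 + Q.derivative.eval (w t) * (Complex.exp (G.eval t) * G.derivative.eval t),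
        Complex.exp (G.eval t) * G.derivative.eval t) t := by
    intro t
    have h1 : HasDerivAt (fun t => Q.eval (w t))
        (Q.derivative.eval (w t) * (Complex.exp (G.eval t) * G.derivative.eval t)) t :=
      (Q.hasDerivAt (w t)).comp t (hwd t)
    exact ((hasDerivAt_id t).add h1).prodMk (hwd t)
  refine ⟨φ, ?_, ?_, ?_, ?_, ?_, ?_⟩
  · exact fun t => (hφd t).differentiableAt
  · intro s t hst
    have h2' : w s = w t := congrArg Prod.snd hst
    have h1' : s + Q.eval (w s) = t + Q.eval (w t) := congrArg Prod.fst hst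
    rw [h2'] at h1'
    exact add_right_cancel h1'
  · intro t
    rw [(hφd t).deriv]
    intro h
    have hsnd := congrArg Prod.snd h
    simp only [Prod.snd_zero] at hsnd
    have hfst := congrArg Prod.fst h
    simp only [Prod.fst_zero] at hfst
    rw [hsnd, mul_zero, add_zero] at hfst
    exact one_ne_zero hfst
  · intro K hK
    obtain ⟨M, hM⟩ := hK.isBounded.subset_closedBall 0
    obtain ⟨C, hC⟩ := (isCompact_closedBall (0:ℂ) M).exists_bound_of_continuousOn
      (Q.continuous.continuousOn)
    have hcont : Continuous φ := by
      apply Continuous.prodMk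
      · exact continuous_id.add (Q.continuous.comp (Complex.continuous_exp.comp G.continuous_aeval))
      · exact Complex.continuous_exp.comp G.continuous_aeval
    refine isCompact_of_isClosed_isBounded (hK.isClosed.preimage hcont) ?_
    apply Bornology.IsBounded.subset (isBounded_closedBall (x := (0:ℂ)) (r := M + C + M))
    intro t ht
    have hφt := hM ht
    rw [mem_closedBall_zero_iff] at hφt
    have hw2 : ‖w t‖ ≤ M := le_trans (norm_snd_le (φ t)) hφt
    have hw1 : ‖t + Q.eval (w t)‖ ≤ M := le_trans (norm_fst_le (φ t)) hφt
    have hQb : ‖Q.eval (w t)‖ ≤ C := hC (w t) (mem_closedBall_zero_iff.mpr hw2)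
    rw [mem_closedBall_zero_iff]
    calc ‖t‖ = ‖t + Q.eval (w t) - Q.eval (w t)‖ := by ring_nf
      _ ≤ ‖t + Q.eval (w t)‖ + ‖Q.eval (w t)‖ := norm_sub_le _ _
      _ ≤ M + C := add_le_add hw1 hQb
      _ ≤ M + C + M := by
          have : (0:ℝ) ≤ M := le_trans (norm_nonneg _) hφt
          linarith
  · intro j
    have hwj : w (α j) = (a j).2 := by
      rw [hw]
      simp only
      rw [hG, Lagrange.eval_interpolate_at_node _ (hα.injOn) (Finset.mem_univ j)]
      exact Complex.exp_log (h0 j)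
    have hQj : Q.eval ((a j).2) = (a j).1 - α j := by
      rw [hQ, Lagrange.eval_interpolate_at_node _ (h2.injOn) (Finset.mem_univ j)]
    rw [hφ]
    simp only
    rw [hwj, hQj]
    exact Prod.ext (by ring) rfl
  · intro t
    exact Complex.exp_ne_zero _
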